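/- Let Q, K ∈ ℝ^{n×d}, let E ∈ ℝ^{2n×2n} be the exponential kernel matrix over the combined dataset of rows of Q followed by rows of K (E_{i,j} = exp(⟨x_i, x_j⟩)), and suppose Ẽ ∈ ℝ^{2n×2n} satisfies E ⪯ Ẽ ⪯ E + λI for some λ > 0. Then the top-right n×n block Ã of Ẽ satisfies ‖Ã − exp(QKᵀ)‖ ≤ λ and ‖Ã − exp(QKᵀ)‖_F ≤ λ√n, where exp(QKᵀ) is the entrywise exponential of QKᵀ. -/

import Mathlib

open scoped Matrix

/-- Spectral (ℓ2 operator) norm of a real matrix. -/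
noncomputable def spec {m n : Type*} [Fintype m] [Fintype n] [DecidableEq n]
    (A : Matrix m n ℝ) : ℝ :=
  ‖(Matrix.toEuclideanLin A).toContinuousLinearMap‖

/-- Frobenius norm of a real matrix. -/
noncomputable def frob {m n : Type*} [Fintype m] [Fintype n] (A : Matrix m n ℝ) : ℝ :=
  Real.sqrt (∑ i, ∑ j, (A i j)^2)

/-- Euclidean norm of a real vector. -/
noncomputable def vnorm {n : Type*} [Fintype n] (x : n → ℝ) : ℝ :=
  Real.sqrt (∑ i, x i^2)

/-- Cauchy–Schwarz for the bilinear form of a PSD matrix. -/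
lemma psd_cs {m : Type*} [Fintype m] (D : Matrix m m ℝ) (hD : D.PosSemidef)
    (u v : m → ℝ) : (u ⬝ᵥ D *ᵥ v)^2 ≤ (u ⬝ᵥ D *ᵥ u) * (v ⬝ᵥ D *ᵥ v) := by
  have hsym : Dᵀ = D := by
    have := hD.1
    simpa [Matrix.IsHermitian] using this
  have hswap : v ⬝ᵥ D *ᵥ u = u ⬝ᵥ D *ᵥ v := by
    rw [Matrix.dotProduct_mulVec, ← Matrix.mulVec_transpose, hsym, dotProduct_comm]
  have h : ∀ t : ℝ, 0 ≤ (v ⬝ᵥ D *ᵥ v) * (t*t) + (2 * (u ⬝ᵥ D *ᵥ v)) * t + (u ⬝ᵥ D *ᵥ u) := by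
    intro t
    have h0 := hD.dotProduct_mulVec_nonneg (u + t • v)
    simp only [star_trivial, Matrix.mulVec_add, Matrix.mulVec_smul, dotProduct_add,
      add_dotProduct, smul_dotProduct, dotProduct_smul, smul_eq_mul] at h0
    rw [hswap] at h0
    nlinarith [h0]
  have := discrim_le_zero h
  rw [discrim] at this
  nlinarith [this]

theorem attention_block_approx {n d : ℕ} (Q K : Matrix (Fin n) (Fin d) ℝ)
    (E Etil : Matrix (Fin n ⊕ Fin n) (Fin n ⊕ Fin n) ℝ)
    (hEdef : ∀ i j, E i j =
      Real.exp ((Sum.elim (fun i => Q i) (fun i => K i) i) ⬝ᵥ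
                 (Sum.elim (fun i => Q i) (fun i => K i) j)))
    (lam : ℝ) (hlam : 0 < lam)
    (hlow : (Etil - E).PosSemidef)
    (hup : (E + lam • (1 : Matrix (Fin n ⊕ Fin n) (Fin n ⊕ Fin n) ℝ) - Etil).PosSemidef) :
    spec (fun i j => Etil (Sum.inl i) (Sum.inr j) - Real.exp (Q i ⬝ᵥ K j)) ≤ lam ∧
    frob (fun i j => Etil (Sum.inl i) (Sum.inr j) - Real.exp (Q i ⬝ᵥ K j))
      ≤ lam * Real.sqrt n := by
  classical
  set D : Matrix (Fin n ⊕ Fin n) (Fin n ⊕ Fin n) ℝ := Etil - E with hDdef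
  set B : Matrix (Fin n) (Fin n) ℝ :=
    fun i j => Etil (Sum.inl i) (Sum.inr j) - Real.exp (Q i ⬝ᵥ K j) with hBdef
  -- B is the top-right block of D
  have hBD : ∀ i j, B i j = D (Sum.inl i) (Sum.inr j) := by
    intro i j
    simp [hBdef, hDdef, Matrix.sub_apply, hEdef (Sum.inl i) (Sum.inr j)]
  -- quadratic form of D is bounded by lam * ‖v‖²
  have hquad : ∀ v : (Fin n ⊕ Fin n) → ℝ, v ⬝ᵥ D *ᵥ v ≤ lam * (v ⬝ᵥ v) := by
    intro v
    have h0 := hup.dotProduct_mulVec_nonneg v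
    have hE : E + lam • (1 : Matrix (Fin n ⊕ Fin n) (Fin n ⊕ Fin n) ℝ) - Etil
        = lam • 1 - D := by
      simp [hDdef]; abel
    rw [hE] at h0
    simp only [star_trivial, Matrix.sub_mulVec, Matrix.smul_mulVec, Matrix.one_mulVec,
      dotProduct_sub, dotProduct_smul, smul_eq_mul] at h0
    linarith
  -- bilinear bound for the block
  have hbil : ∀ x y : Fin n → ℝ, (y ⬝ᵥ B *ᵥ x)^2 ≤ lam^2 * (y ⬝ᵥ y) * (x ⬝ᵥ x) := by
    intro x y
    set u : (Fin n ⊕ Fin n) → ℝ := Sum.elim y 0 with hu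
    set v : (Fin n ⊕ Fin n) → ℝ := Sum.elim 0 x with hv
    have huDv : u ⬝ᵥ D *ᵥ v = y ⬝ᵥ B *ᵥ x := by
      simp only [hu, hv, dotProduct, Matrix.mulVec, Fintype.sum_sum_type,
        Sum.elim_inl, Sum.elim_inr, Pi.zero_apply, zero_mul, mul_zero,
        Finset.sum_const_zero, add_zero, zero_add]
      refine Finset.sum_congr rfl fun i _ => ?_
      congr 1
      refine Finset.sum_congr rfl fun j _ => ?_
      rw [hBD]
    have huu : u ⬝ᵥ u = y ⬝ᵥ y := by
      simp [hu, dotProduct, Fintype.sum_sum_type]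
    have hvv : v ⬝ᵥ v = x ⬝ᵥ x := by
      simp [hv, dotProduct, Fintype.sum_sum_type]
    have hcs := psd_cs D hlow u v
    have h1 := hquad u
    have h2 := hquad v
    have h3 := hlow.dotProduct_mulVec_nonneg u
    have h4 := hlow.dotProduct_mulVec_nonneg v
    simp only [star_trivial] at h3 h4
    have hyy : (0:ℝ) ≤ y ⬝ᵥ y := Finset.sum_nonneg fun i _ => mul_self_nonneg _
    have hxx : (0:ℝ) ≤ x ⬝ᵥ x := Finset.sum_nonneg fun i _ => mul_self_nonneg _
    rw [huu] at h1
    rw [hvv] at h2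
    rw [huDv] at hcs
    have hprod : u ⬝ᵥ D *ᵥ u * (v ⬝ᵥ D *ᵥ v) ≤ (lam * (y ⬝ᵥ y)) * (lam * (x ⬝ᵥ x)) :=
      mul_le_mul h1 h2 h4 (h3.trans h1)
    nlinarith [hcs, h1, h2, h3, h4, hyy, hxx, hlam,
      mul_le_mul_of_nonneg_right h1 h4,
      mul_le_mul_of_nonneg_left h2 (mul_pos hlam hlam).le]
  -- column-wise bound
  have hcol : ∀ x : Fin n → ℝ, ∑ i, ((B *ᵥ x) i)^2 ≤ lam^2 * ∑ i, (x i)^2 := by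
    intro x
    set w : Fin n → ℝ := B *ᵥ x with hw
    have hs : w ⬝ᵥ w = ∑ i, (w i)^2 := by
      simp [dotProduct, sq]
    have hx2 : x ⬝ᵥ x = ∑ i, (x i)^2 := by
      simp [dotProduct, sq]
    have hww : (0:ℝ) ≤ w ⬝ᵥ w := Finset.sum_nonneg fun i _ => mul_self_nonneg _
    have hb := hbil x w
    have hwBx : w ⬝ᵥ B *ᵥ x = w ⬝ᵥ w := by rw [hw]
    rw [hwBx] at hb
    rcases eq_or_lt_of_le hww with h0 | h0
    · rw [hs] at h0
      rw [← h0]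
      positivity
    · have : w ⬝ᵥ w ≤ lam^2 * (x ⬝ᵥ x) := by nlinarith [hb, h0]
      rw [hs, hx2] at this
      exact this
  constructor
  · -- spectral bound
    rw [spec]
    refine ContinuousLinearMap.opNorm_le_bound _ hlam.le fun x => ?_
    rw [LinearMap.coe_toContinuousLinearMap']
    have hx : (Matrix.toEuclideanLin B) x
        = (WithLp.equiv 2 (Fin n → ℝ)).symm (B *ᵥ (WithLp.equiv 2 (Fin n → ℝ)) x) := rfl
    rw [hx]
    set x' : Fin n → ℝ := (WithLp.equiv 2 (Fin n → ℝ)) x with hx'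
    have hn1 : ‖(WithLp.equiv 2 (Fin n → ℝ)).symm (B *ᵥ x')‖
        = Real.sqrt (∑ i, ((B *ᵥ x') i)^2) := by
      rw [EuclideanSpace.norm_eq]
      congr 1
      refine Finset.sum_congr rfl fun i _ => ?_
      rw [Real.norm_eq_abs, sq_abs]
      rfl
    have hn2 : ‖x‖ = Real.sqrt (∑ i, (x' i)^2) := by
      rw [EuclideanSpace.norm_eq]
      congr 1
      refine Finset.sum_congr rfl fun i _ => ?_
      rw [Real.norm_eq_abs, sq_abs]
      rfl
    rw [hn1, hn2]
    calc Real.sqrt (∑ i, ((B *ᵥ x') i)^2)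
        ≤ Real.sqrt (lam^2 * ∑ i, (x' i)^2) := Real.sqrt_le_sqrt (hcol x')
      _ = lam * Real.sqrt (∑ i, (x' i)^2) := by
          rw [Real.sqrt_mul (sq_nonneg lam), Real.sqrt_sq hlam.le]
  · -- Frobenius bound
    rw [frob]
    have hsum : ∑ i, ∑ j, (B i j)^2 ≤ lam^2 * n := by
      rw [Finset.sum_comm]
      have : ∀ j : Fin n, ∑ i, (B i j)^2 ≤ lam^2 := by
        intro j
        have := hcol (Pi.single j 1 : Fin n → ℝ)
        have h1 : ∑ i, ((B *ᵥ Pi.single j 1) i)^2 = ∑ i, (B i j)^2 := by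
          simp [Matrix.mulVec_single]
        have h2 : ∑ i, (Pi.single j (1:ℝ) i)^2 = (1:ℝ) := by
          simp [Pi.single_apply, Finset.sum_ite_eq']
        rw [h1, h2, mul_one] at this
        exact this
      calc ∑ j : Fin n, ∑ i, (B i j)^2 ≤ ∑ _j : Fin n, lam^2 :=
            Finset.sum_le_sum fun j _ => this j
        _ = lam^2 * n := by simp [mul_comm]
    calc Real.sqrt (∑ i, ∑ j, (B i j)^2) ≤ Real.sqrt (lam^2 * n) := Real.sqrt_le_sqrt hsum
      _ = lam * Real.sqrt n := by
          rw [Real.sqrt_mul (sq_nonneg lam), Real.sqrt_sq hlam.le]
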